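/- Suppose the coefficient functions are constant matrices A ∈ ℝ^{n×n}, B ∈ ℝ^{n×m}, C ∈ ℝ^{m×m}, D ∈ ℝ^{m×n}, and set Λ := [[A+BΦ₀, B], [−(Φ₀A+CΦ₀+Φ₀BΦ₀+D), −(C+Φ₀B)]] ∈ ℝ^{(n+m)×(n+m)}. Assume that for every t ∈ [0,T] the lower-right m×m block of the matrix exponential exp(tΛ) has positive determinant. Then φ(t) := Φ₀ − [ (exp((T−t)Λ))₂₂ ]⁻¹ · (exp((T−t)Λ))₂₁ is differentiable on [0,T] and satisfies the Riccati terminal value problem: φ'(t) + φ(t)A + Cφ(t) + φ(t)Bφ(t) + D = 0 for all t ∈ [0,T] and φ(T) = Φ₀. (Paper's Proposition 2.4.) -/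

import Mathlib

open Set Matrix

/-! ### Auxiliary lemmas (proved with ℓ∞-operator-norm instances) -/

section LinftyAux

attribute [local instance] Matrix.linftyOpNormedAddCommGroup Matrix.linftyOpNormedSpace
  Matrix.linftyOpNormedRing Matrix.linftyOpNormedAlgebra

variable {n m : ℕ}

private noncomputable def blk21 :
    Matrix (Fin n ⊕ Fin m) (Fin n ⊕ Fin m) ℝ →L[ℝ] Matrix (Fin m) (Fin n) ℝ :=
  LinearMap.toContinuousLinearMap
    { toFun := Matrix.toBlocks₂₁, map_add' := fun _ _ => rfl, map_smul' := fun _ _ => rfl }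

private noncomputable def blk22 :
    Matrix (Fin n ⊕ Fin m) (Fin n ⊕ Fin m) ℝ →L[ℝ] Matrix (Fin m) (Fin m) ℝ :=
  LinearMap.toContinuousLinearMap
    { toFun := Matrix.toBlocks₂₂, map_add' := fun _ _ => rfl, map_smul' := fun _ _ => rfl }

private noncomputable def mulL :
    Matrix (Fin m) (Fin m) ℝ →L[ℝ] Matrix (Fin m) (Fin n) ℝ →L[ℝ] Matrix (Fin m) (Fin n) ℝ :=
  LinearMap.toContinuousLinearMap
    { toFun := fun X => LinearMap.toContinuousLinearMap
        { toFun := fun Y => X * Y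
          map_add' := fun Y Z => Matrix.mul_add X Y Z
          map_smul' := fun c Y => (Matrix.mul_smul X c Y) }
      map_add' := by
        intro X X'; apply ContinuousLinearMap.ext; intro Y
        simp [Matrix.add_mul, LinearMap.coe_toContinuousLinearMap']
      map_smul' := by
        intro c X; apply ContinuousLinearMap.ext; intro Y
        simp [Matrix.smul_mul, LinearMap.coe_toContinuousLinearMap'] }

private noncomputable instance clmNAG :
    NormedAddCommGroup (Matrix (Fin m) (Fin n) ℝ →L[ℝ] Matrix (Fin m) (Fin n) ℝ) :=
  ContinuousLinearMap.toNormedAddCommGroup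

private noncomputable instance clmNS :
    NormedSpace ℝ (Matrix (Fin m) (Fin n) ℝ →L[ℝ] Matrix (Fin m) (Fin n) ℝ) :=
  ContinuousLinearMap.toNormedSpace

set_option maxHeartbeats 1000000 in
theorem riccati_aux (T : ℝ) (Λ : Matrix (Fin n ⊕ Fin m) (Fin n ⊕ Fin m) ℝ)
    (Φ₀ : Matrix (Fin m) (Fin n) ℝ) (t : ℝ)
    (hu : IsUnit ((NormedSpace.exp ((T - t) • Λ)).toBlocks₂₂)) :
    HasDerivAt (fun s => Φ₀ - ((NormedSpace.exp ((T - s) • Λ)).toBlocks₂₂)⁻¹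
        * (NormedSpace.exp ((T - s) • Λ)).toBlocks₂₁)
      (-(-(((NormedSpace.exp ((T - t) • Λ)).toBlocks₂₂)⁻¹
             * (-(NormedSpace.exp ((T - t) • Λ) * Λ)).toBlocks₂₂
             * ((NormedSpace.exp ((T - t) • Λ)).toBlocks₂₂)⁻¹)
           * (NormedSpace.exp ((T - t) • Λ)).toBlocks₂₁
         + ((NormedSpace.exp ((T - t) • Λ)).toBlocks₂₂)⁻¹
           * (-(NormedSpace.exp ((T - t) • Λ) * Λ)).toBlocks₂₁)) t := by
  have hexp : HasDerivAt (fun u : ℝ => NormedSpace.exp (u • Λ))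
      (NormedSpace.exp ((T - t) • Λ) * Λ) (T - t) := hasDerivAt_exp_smul_const (𝕂 := ℝ) Λ (T - t)
  have hlin : HasDerivAt (fun s : ℝ => T - s) (-1) t := (hasDerivAt_id t).const_sub T
  have hg : HasDerivAt (fun s : ℝ => NormedSpace.exp ((T - s) • Λ))
      (-(NormedSpace.exp ((T - t) • Λ) * Λ)) t := by
    have h := HasDerivAt.scomp_of_eq t hexp hlin rfl
    rw [neg_one_smul] at h
    exact h
  have hP : HasDerivAt (fun s => (NormedSpace.exp ((T - s) • Λ)).toBlocks₂₁)
      ((-(NormedSpace.exp ((T - t) • Λ) * Λ)).toBlocks₂₁) t :=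
    (blk21.hasFDerivAt).comp_hasDerivAt t hg
  have hQ : HasDerivAt (fun s => (NormedSpace.exp ((T - s) • Λ)).toBlocks₂₂)
      ((-(NormedSpace.exp ((T - t) • Λ) * Λ)).toBlocks₂₂) t :=
    (blk22.hasFDerivAt).comp_hasDerivAt t hg
  have hR : HasDerivAt (fun s => ((NormedSpace.exp ((T - s) • Λ)).toBlocks₂₂)⁻¹)
      (-(((NormedSpace.exp ((T - t) • Λ)).toBlocks₂₂)⁻¹
          * (-(NormedSpace.exp ((T - t) • Λ) * Λ)).toBlocks₂₂
          * ((NormedSpace.exp ((T - t) • Λ)).toBlocks₂₂)⁻¹)) t := by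
    have hinv := hasFDerivAt_ringInverse (𝕜 := ℝ) hu.unit
    rw [hu.unit_spec] at hinv
    have h3 := hinv.comp_hasDerivAt t hQ
    have e1 : Ring.inverse ∘ (fun s => (NormedSpace.exp ((T - s) • Λ)).toBlocks₂₂)
        = fun s => ((NormedSpace.exp ((T - s) • Λ)).toBlocks₂₂)⁻¹ := by
      funext s
      simp only [Function.comp_apply]
      rw [Matrix.nonsing_inv_eq_ringInverse]
    rw [e1] at h3
    refine h3.congr_deriv ?_
    simp only [ContinuousLinearMap.neg_apply, ContinuousLinearMap.mulLeftRight_apply]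
    rw [Matrix.coe_units_inv, hu.unit_spec, Matrix.mul_assoc]
  have hc : HasDerivAt (fun s => mulL (n := n) (m := m) (((NormedSpace.exp ((T - s) • Λ)).toBlocks₂₂)⁻¹))
      (mulL (n := n) (m := m) (-(((NormedSpace.exp ((T - t) • Λ)).toBlocks₂₂)⁻¹
          * (-(NormedSpace.exp ((T - t) • Λ) * Λ)).toBlocks₂₂
          * ((NormedSpace.exp ((T - t) • Λ)).toBlocks₂₂)⁻¹))) t :=
    ((mulL (n := n) (m := m)).hasFDerivAt).comp_hasDerivAt t hR
  have hprod := hc.clm_apply hP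
  have e2 : ∀ (X : Matrix (Fin m) (Fin m) ℝ) (Y : Matrix (Fin m) (Fin n) ℝ),
      mulL (n := n) (m := m) X Y = X * Y := fun _ _ => rfl
  exact hprod.const_sub Φ₀

end LinftyAux

theorem toBlocks₂₁_neg {l r u v : Type*} (M : Matrix (u ⊕ v) (l ⊕ r) ℝ) :
    (-M).toBlocks₂₁ = -(M.toBlocks₂₁) := rfl

theorem toBlocks₂₂_neg {l r u v : Type*} (M : Matrix (u ⊕ v) (l ⊕ r) ℝ) :
    (-M).toBlocks₂₂ = -(M.toBlocks₂₂) := rfl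

theorem riccati_algebra {n m : ℕ}
    (A : Matrix (Fin n) (Fin n) ℝ) (B : Matrix (Fin n) (Fin m) ℝ)
    (C : Matrix (Fin m) (Fin m) ℝ) (D : Matrix (Fin m) (Fin n) ℝ)
    (Φ₀ : Matrix (Fin m) (Fin n) ℝ)
    (E : Matrix (Fin n ⊕ Fin m) (Fin n ⊕ Fin m) ℝ)
    (R : Matrix (Fin m) (Fin m) ℝ)
    (hRQ : R * E.toBlocks₂₂ = 1) :
    -(-(R * (-(E * Matrix.fromBlocks (A + B * Φ₀) B
          (-(Φ₀ * A + C * Φ₀ + Φ₀ * B * Φ₀ + D)) (-(C + Φ₀ * B)))).toBlocks₂₂ * R)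
        * E.toBlocks₂₁
      + R * (-(E * Matrix.fromBlocks (A + B * Φ₀) B
          (-(Φ₀ * A + C * Φ₀ + Φ₀ * B * Φ₀ + D)) (-(C + Φ₀ * B)))).toBlocks₂₁)
    = -((Φ₀ - R * E.toBlocks₂₁) * A + C * (Φ₀ - R * E.toBlocks₂₁)
        + (Φ₀ - R * E.toBlocks₂₁) * B * (Φ₀ - R * E.toBlocks₂₁) + D) := by
  obtain ⟨E11, E12, P, Q, rfl⟩ : ∃ a b c d, E = fromBlocks a b c d :=
    ⟨_, _, _, _, (fromBlocks_toBlocks E).symm⟩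
  simp only [toBlocks_fromBlocks₂₂] at hRQ
  simp only [fromBlocks_multiply, toBlocks₂₁_neg, toBlocks₂₂_neg,
    toBlocks_fromBlocks₂₁, toBlocks_fromBlocks₂₂]
  simp only [Matrix.neg_mul, Matrix.mul_neg, neg_neg, Matrix.mul_add, Matrix.add_mul,
    Matrix.mul_sub, Matrix.sub_mul, neg_add, Matrix.mul_one, Matrix.one_mul, neg_sub]
  simp only [← Matrix.mul_assoc]
  rw [hRQ]
  simp only [Matrix.one_mul]
  abel

attribute [local instance] Matrix.normedAddCommGroup Matrix.normedSpace

theorem hasDerivAt_linfty_iff {p q : Type*} [Fintype p] [Fintype q]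
    {f : ℝ → Matrix p q ℝ} {f' : Matrix p q ℝ} {x : ℝ} :
    @HasDerivAt ℝ _ (Matrix p q ℝ) (Matrix.linftyOpNormedAddCommGroup (m := p) (n := q) (α := ℝ)).toAddCommGroup
      (Matrix.linftyOpNormedSpace (R := ℝ) (m := p) (n := q) (α := ℝ)).toModule
      (Matrix.linftyOpNormedAddCommGroup (m := p) (n := q) (α := ℝ)).toUniformSpace.toTopologicalSpace _ f f' x ↔ HasDerivAt f f' x := by
  constructor <;> intro h
  · exact hasDerivAt_iff_tendsto_slope.mpr
      ((@hasDerivAt_iff_tendsto_slope ℝ _ (Matrix p q ℝ) Matrix.linftyOpNormedAddCommGroup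
        Matrix.linftyOpNormedSpace f f' x).mp h)
  · exact (@hasDerivAt_iff_tendsto_slope ℝ _ (Matrix p q ℝ) Matrix.linftyOpNormedAddCommGroup
        Matrix.linftyOpNormedSpace f f' x).mpr (hasDerivAt_iff_tendsto_slope.mp h)

set_option maxHeartbeats 2000000 in
/-- Paper's Proposition 2.4: in the constant-coefficient case, with
`Λ = [[A + B Φ₀, B], [-(Φ₀ A + C Φ₀ + Φ₀ B Φ₀ + D), -(C + Φ₀ B)]]`, if the lower-right
`m × m` block of `exp(t Λ)` has positive determinant for every `t ∈ [0, T]`, then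
`φ(t) := Φ₀ - (exp((T - t) Λ))₂₂⁻¹ * (exp((T - t) Λ))₂₁` solves the Riccati terminal
value problem `φ' + φ A + C φ + φ B φ + D = 0`, `φ(T) = Φ₀`. -/
theorem riccati_via_matrix_exponential
    {n m : ℕ} {T : ℝ} (hT : 0 < T)
    (A : Matrix (Fin n) (Fin n) ℝ) (B : Matrix (Fin n) (Fin m) ℝ)
    (C : Matrix (Fin m) (Fin m) ℝ) (D : Matrix (Fin m) (Fin n) ℝ)
    (Φ₀ : Matrix (Fin m) (Fin n) ℝ)
    (Λ : Matrix (Fin n ⊕ Fin m) (Fin n ⊕ Fin m) ℝ)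
    (hΛ : Λ = Matrix.fromBlocks (A + B * Φ₀) B
        (-(Φ₀ * A + C * Φ₀ + Φ₀ * B * Φ₀ + D)) (-(C + Φ₀ * B)))
    (hdet : ∀ t ∈ Icc (0 : ℝ) T, 0 < ((NormedSpace.exp (t • Λ)).toBlocks₂₂).det) :
    (∀ t ∈ Icc (0 : ℝ) T,
      HasDerivAt
        (fun s => Φ₀ - ((NormedSpace.exp ((T - s) • Λ)).toBlocks₂₂)⁻¹
            * (NormedSpace.exp ((T - s) • Λ)).toBlocks₂₁)
        (-((Φ₀ - ((NormedSpace.exp ((T - t) • Λ)).toBlocks₂₂)⁻¹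
              * (NormedSpace.exp ((T - t) • Λ)).toBlocks₂₁) * A
            + C * (Φ₀ - ((NormedSpace.exp ((T - t) • Λ)).toBlocks₂₂)⁻¹
              * (NormedSpace.exp ((T - t) • Λ)).toBlocks₂₁)
            + (Φ₀ - ((NormedSpace.exp ((T - t) • Λ)).toBlocks₂₂)⁻¹
              * (NormedSpace.exp ((T - t) • Λ)).toBlocks₂₁) * B
              * (Φ₀ - ((NormedSpace.exp ((T - t) • Λ)).toBlocks₂₂)⁻¹
                * (NormedSpace.exp ((T - t) • Λ)).toBlocks₂₁)
            + D)) t)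
    ∧ Φ₀ - ((NormedSpace.exp ((T - T) • Λ)).toBlocks₂₂)⁻¹
        * (NormedSpace.exp ((T - T) • Λ)).toBlocks₂₁ = Φ₀ := by
  have h21 : (1 : Matrix (Fin n ⊕ Fin m) (Fin n ⊕ Fin m) ℝ).toBlocks₂₁ = 0 := by
    rw [← Matrix.fromBlocks_one, Matrix.toBlocks_fromBlocks₂₁]
  subst hΛ
  constructor
  · intro t ht
    have hTt : T - t ∈ Icc (0 : ℝ) T := ⟨by linarith [ht.2], by linarith [ht.1]⟩
    have hdpos := hdet (T - t) hTt
    have hud : IsUnit ((NormedSpace.exp ((T - t) • Matrix.fromBlocks (A + B * Φ₀) B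
        (-(Φ₀ * A + C * Φ₀ + Φ₀ * B * Φ₀ + D)) (-(C + Φ₀ * B)))).toBlocks₂₂).det :=
      isUnit_iff_ne_zero.mpr (ne_of_gt hdpos)
    have hu : IsUnit ((NormedSpace.exp ((T - t) • Matrix.fromBlocks (A + B * Φ₀) B
        (-(Φ₀ * A + C * Φ₀ + Φ₀ * B * Φ₀ + D)) (-(C + Φ₀ * B)))).toBlocks₂₂) :=
      (Matrix.isUnit_iff_isUnit_det _).mpr hud
    have key := hasDerivAt_linfty_iff.mp (riccati_aux T (Matrix.fromBlocks (A + B * Φ₀) B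
        (-(Φ₀ * A + C * Φ₀ + Φ₀ * B * Φ₀ + D)) (-(C + Φ₀ * B))) Φ₀ t hu)
    have hRQ : ((NormedSpace.exp ((T - t) • Matrix.fromBlocks (A + B * Φ₀) B
          (-(Φ₀ * A + C * Φ₀ + Φ₀ * B * Φ₀ + D)) (-(C + Φ₀ * B)))).toBlocks₂₂)⁻¹
        * (NormedSpace.exp ((T - t) • Matrix.fromBlocks (A + B * Φ₀) B
          (-(Φ₀ * A + C * Φ₀ + Φ₀ * B * Φ₀ + D)) (-(C + Φ₀ * B)))).toBlocks₂₂ = 1 :=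
      Matrix.nonsing_inv_mul _ hud
    have halg := riccati_algebra A B C D Φ₀
      (NormedSpace.exp ((T - t) • Matrix.fromBlocks (A + B * Φ₀) B
        (-(Φ₀ * A + C * Φ₀ + Φ₀ * B * Φ₀ + D)) (-(C + Φ₀ * B))))
      (((NormedSpace.exp ((T - t) • Matrix.fromBlocks (A + B * Φ₀) B
        (-(Φ₀ * A + C * Φ₀ + Φ₀ * B * Φ₀ + D)) (-(C + Φ₀ * B)))).toBlocks₂₂)⁻¹) hRQ
    rw [halg] at key
    exact key
  · rw [sub_self, zero_smul, NormedSpace.exp_zero, h21, Matrix.mul_zero, sub_zero]
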